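/- Let a ∈ ℝ^p, let A be a symmetric p×p real matrix, and let K be a (nonnegative) measure on ℝ^p∖{0} with ∫(|z|²∧|z|) dK(z) < ∞ and ∫_{|z|>1} e^{k·z} dK(z) < ∞ for all k ∈ ℝ^p. Then the function R : ℂ^p → ℂ defined by R(y) = y·a + ½ yᵀ A y + ∫ (e^{y·z} − 1 − y·z) dK(z) (where y·z = Σ yᵢ zᵢ for y ∈ ℂ^p, z ∈ ℝ^p) is well-defined and analytic on all of ℂ^p. -/

import Mathlib

open MeasureTheory RealInnerProductSpace
open scoped ENNReal Nat

set_option synthInstance.maxHeartbeats 1000000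
set_option maxHeartbeats 4000000
set_option autoImplicit false

section Statement8Aux

variable {p : ℕ}



lemma s8_norm_le_sum_abs (z : EuclideanSpace ℝ (Fin p)) : ‖z‖ ≤ ∑ i, |z i| := by
  rw [EuclideanSpace.norm_eq]
  have h1 : ∑ i, ‖z i‖ ^ 2 ≤ (∑ i, |z i|) ^ 2 := by
    simpa [Real.norm_eq_abs] using
      Finset.sum_sq_le_sq_sum_of_nonneg (s := Finset.univ) (f := fun i => |z i|)
        (fun i _ => abs_nonneg _)
  calc Real.sqrt (∑ i, ‖z i‖ ^ 2) ≤ Real.sqrt ((∑ i, |z i|) ^ 2) := Real.sqrt_le_sqrt h1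
    _ = ∑ i, |z i| := Real.sqrt_sq (Finset.sum_nonneg fun i _ => abs_nonneg _)

lemma s8_abs_dot_le (y : EuclideanSpace ℂ (Fin p)) (z : EuclideanSpace ℝ (Fin p)) :
    ‖∑ i, y i * (z i : ℂ)‖ ≤ ‖y‖ * ‖z‖ := by
  calc ‖∑ i, y i * (z i : ℂ)‖ ≤ ∑ i, ‖y i * (z i : ℂ)‖ := norm_sum_le _ _
    _ = ∑ i, ‖y i‖ * ‖z i‖ := by simp [Complex.norm_real]
    _ ≤ Real.sqrt (∑ i, ‖y i‖ ^ 2) * Real.sqrt (∑ i, ‖z i‖ ^ 2) :=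
        Real.sum_mul_le_sqrt_mul_sqrt _ _ _
    _ = ‖y‖ * ‖z‖ := by rw [EuclideanSpace.norm_eq, EuclideanSpace.norm_eq]

lemma s8_inner_eq (k z : EuclideanSpace ℝ (Fin p)) : ⟪k, z⟫ = ∑ i, k i * z i := by
  simp [PiLp.inner_apply, RCLike.inner_apply, conj_trivial, mul_comm]
/-- sign-pattern vectors -/
def s8k (c : ℝ) (t : Finset (Fin p)) : EuclideanSpace ℝ (Fin p) :=
  WithLp.toLp 2 (fun i => if i ∈ t then c else -c)

lemma s8_exp_mul_norm_le (c : ℝ) (hc : 0 ≤ c) (z : EuclideanSpace ℝ (Fin p)) :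
    Real.exp (c * ‖z‖) ≤ ∑ t : Finset (Fin p), Real.exp ⟪s8k c t, z⟫ := by
  have h1 : Real.exp (c * ‖z‖) ≤ ∏ i, Real.exp (c * |z i|) := by
    rw [← Real.exp_sum]
    apply Real.exp_le_exp.2
    rw [← Finset.mul_sum]
    exact mul_le_mul_of_nonneg_left (s8_norm_le_sum_abs z) hc
  have h2 : ∏ i, Real.exp (c * |z i|) ≤ ∏ i, (Real.exp (c * z i) + Real.exp (-(c * z i))) := by
    apply Finset.prod_le_prod (fun i _ => (Real.exp_pos _).le)
    intro i _
    rcases abs_cases (z i) with ⟨h, _⟩ | ⟨h, _⟩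
    · rw [h]; exact le_add_of_nonneg_right (Real.exp_pos _).le
    · rw [h, mul_neg]; exact le_add_of_nonneg_left (Real.exp_pos _).le
  refine (h1.trans h2).trans (le_of_eq ?_)
  rw [Finset.prod_add, ← Finset.powerset_univ]
  apply Finset.sum_congr rfl
  intro t ht
  rw [s8_inner_eq]
  have hsplit : ∑ i, (s8k c t) i * z i
      = ∑ i ∈ t, (s8k c t) i * z i + ∑ i ∈ Finset.univ \ t, (s8k c t) i * z i := by
    rw [← Finset.sum_sdiff (Finset.subset_univ t), add_comm]
  have h3 : ∑ i ∈ t, (s8k c t) i * z i = ∑ i ∈ t, c * z i :=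
    Finset.sum_congr rfl fun i hi => by simp [s8k, hi]
  have h4 : ∑ i ∈ Finset.univ \ t, (s8k c t) i * z i
      = ∑ i ∈ Finset.univ \ t, -(c * z i) :=
    Finset.sum_congr rfl fun i hi => by
      have : i ∉ t := (Finset.mem_sdiff.1 hi).2
      simp [s8k, this]
  rw [hsplit, h3, h4, Real.exp_add, Real.exp_sum, Real.exp_sum]

lemma s8_pow_le_exp (t : ℝ) (ht : 0 ≤ t) (n : ℕ) : t ^ n ≤ (n ! : ℝ) * Real.exp t := by
  have h : HasSum (fun m : ℕ => ((m ! : ℝ))⁻¹ • t ^ m) (Real.exp t) := by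
    rw [Real.exp_eq_exp_ℝ]; exact NormedSpace.exp_series_hasSum_exp' t
  have h2 : ((n ! : ℝ))⁻¹ * t ^ n ≤ Real.exp t := by
    simpa using le_hasSum h n (fun m _ => by positivity)
  have hn : (0:ℝ) < n ! := by exact_mod_cast Nat.factorial_pos n
  calc t ^ n = (n ! : ℝ) * (((n !:ℝ))⁻¹ * t ^ n) := by field_simp
    _ ≤ (n ! : ℝ) * Real.exp t := by nlinarith

lemma s8_hasSum_tail (w : ℂ) :
    HasSum (fun n : ℕ => (((n + 2)! : ℂ))⁻¹ * w ^ (n + 2)) (Complex.exp w - 1 - w) := by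
  have h : HasSum (fun m : ℕ => ((m ! : ℂ))⁻¹ • w ^ m) (Complex.exp w) := by
    rw [Complex.exp_eq_exp_ℂ]; exact NormedSpace.exp_series_hasSum_exp' w
  have h2 := (hasSum_nat_add_iff' (f := fun m : ℕ => ((m ! : ℂ))⁻¹ • w ^ m) 2).2 h
  have h3 : ∑ i ∈ Finset.range 2, ((i ! : ℂ))⁻¹ • w ^ i = 1 + w := by
    simp [Finset.sum_range_succ]
  rw [h3] at h2
  simpa [smul_eq_mul, sub_sub] using h2

lemma s8_norm_exp_bound (w : ℂ) :
    ‖Complex.exp w - 1 - w‖ ≤ ‖w‖ ^ 2 * Real.exp ‖w‖ := by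
  have hR : HasSum (fun m : ℕ => ((m ! : ℝ))⁻¹ * ‖w‖ ^ m) (Real.exp ‖w‖) := by
    have := NormedSpace.exp_series_hasSum_exp' (𝕂 := ℝ) ‖w‖
    rw [← Real.exp_eq_exp_ℝ] at this
    simpa [smul_eq_mul] using this
  have hRb : HasSum (fun m : ℕ => ‖w‖ ^ 2 * (((m ! : ℝ))⁻¹ * ‖w‖ ^ m))
      (‖w‖ ^ 2 * Real.exp ‖w‖) := hR.mul_left _
  have hterm : ∀ n : ℕ, ‖(((n + 2)! : ℂ))⁻¹ * w ^ (n + 2)‖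
      ≤ ‖w‖ ^ 2 * (((n ! : ℝ))⁻¹ * ‖w‖ ^ n) := by
    intro n
    have hfac : (n ! : ℝ) ≤ ((n + 2)! : ℝ) := by
      exact_mod_cast Nat.factorial_le (by omega)
    have hn : (0:ℝ) < n ! := by exact_mod_cast Nat.factorial_pos n
    have : ‖(((n + 2)! : ℂ))⁻¹ * w ^ (n + 2)‖ = (((n + 2)! : ℝ))⁻¹ * ‖w‖ ^ (n + 2) := by
      simp [norm_mul, norm_pow]
    rw [this]
    have h1 : (((n + 2)! : ℝ))⁻¹ ≤ ((n ! : ℝ))⁻¹ := by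
      apply inv_anti₀ hn hfac
    calc (((n + 2)! : ℝ))⁻¹ * ‖w‖ ^ (n + 2) ≤ ((n ! : ℝ))⁻¹ * ‖w‖ ^ (n + 2) :=
          mul_le_mul_of_nonneg_right h1 (by positivity)
      _ = ‖w‖ ^ 2 * (((n ! : ℝ))⁻¹ * ‖w‖ ^ n) := by ring
  have hsumm : Summable (fun n : ℕ => ‖(((n + 2)! : ℂ))⁻¹ * w ^ (n + 2)‖) :=
    Summable.of_nonneg_of_le (fun n => norm_nonneg _) hterm hRb.summable
  calc ‖Complex.exp w - 1 - w‖ = ‖∑' n : ℕ, (((n + 2)! : ℂ))⁻¹ * w ^ (n + 2)‖ := by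
        rw [(s8_hasSum_tail w).tsum_eq]
    _ ≤ ∑' n : ℕ, ‖(((n + 2)! : ℂ))⁻¹ * w ^ (n + 2)‖ := norm_tsum_le_tsum_norm hsumm
    _ ≤ ∑' n : ℕ, ‖w‖ ^ 2 * (((n ! : ℝ))⁻¹ * ‖w‖ ^ n) := Summable.tsum_le_tsum hterm hsumm hRb.summable
    _ = ‖w‖ ^ 2 * Real.exp ‖w‖ := hRb.tsum_eq
variable {K : Measure (EuclideanSpace ℝ (Fin p))}

noncomputable def s8S (p : ℕ) : Set (EuclideanSpace ℝ (Fin p)) := {z | 1 < ‖z‖}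

lemma s8S_meas : MeasurableSet (s8S p) :=
  (isOpen_lt continuous_const continuous_norm).measurableSet


lemma s8_min_integrable (hmom : ∫⁻ z, ENNReal.ofReal (min (‖z‖ ^ 2) ‖z‖) ∂K < ⊤) :
    Integrable (fun z : EuclideanSpace ℝ (Fin p) => min (‖z‖ ^ 2) ‖z‖) K := by
  constructor
  · exact ((continuous_norm.pow 2).min continuous_norm).aestronglyMeasurable
  · rw [hasFiniteIntegral_iff_ofReal (Filter.Eventually.of_forall fun z =>
      le_min (by positivity) (norm_nonneg _))]
    exact hmom

lemma s8_env_integrable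
    (hexp : ∀ k : EuclideanSpace ℝ (Fin p),
      ∫⁻ z in {z : EuclideanSpace ℝ (Fin p) | 1 < ‖z‖},
        ENNReal.ofReal (Real.exp ⟪k, z⟫) ∂K < ⊤)
    (c : ℝ) (hc : 0 ≤ c) :
    Integrable ((s8S p).indicator fun z => Real.exp (c * ‖z‖)) K := by
  have hone : ∀ k : EuclideanSpace ℝ (Fin p),
      IntegrableOn (fun z => Real.exp ⟪k, z⟫) (s8S p) K := by
    intro k
    constructor
    · exact (Real.continuous_exp.comp (continuous_const.inner continuous_id)).aestronglyMeasurable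
    · rw [hasFiniteIntegral_iff_ofReal (Filter.Eventually.of_forall fun z => (Real.exp_pos _).le)]
      exact hexp k
  have hsum : IntegrableOn
      (fun z => ∑ t : Finset (Fin p), Real.exp ⟪s8k c t, z⟫) (s8S p) K :=
    integrable_finset_sum _ fun t _ => hone (s8k c t)
  have hind := hsum.integrable_indicator s8S_meas
  refine Integrable.mono' hind ?_ ?_
  · exact ((Real.continuous_exp.comp (continuous_norm.const_smul c)).aestronglyMeasurable).indicator
      s8S_meas
  · refine Filter.Eventually.of_forall fun z => ?_
    by_cases hz : z ∈ s8S p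
    · rw [Set.indicator_of_mem hz, Set.indicator_of_mem hz, Real.norm_eq_abs,
        abs_of_nonneg (Real.exp_pos _).le]
      exact s8_exp_mul_norm_le c hc z
    · simp [Set.indicator_of_notMem hz]

noncomputable def s8L (z : EuclideanSpace ℝ (Fin p)) : EuclideanSpace ℂ (Fin p) →L[ℂ] ℂ :=
  ∑ i, (z i : ℂ) • (EuclideanSpace.proj i : EuclideanSpace ℂ (Fin p) →L[ℂ] ℂ)

lemma s8L_apply (z : EuclideanSpace ℝ (Fin p)) (y : EuclideanSpace ℂ (Fin p)) :
    s8L z y = ∑ i, y i * (z i : ℂ) := by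
  simp [s8L, ContinuousLinearMap.sum_apply, mul_comm]

lemma s8L_norm (z : EuclideanSpace ℝ (Fin p)) : ‖s8L z‖ ≤ ‖z‖ := by
  refine ContinuousLinearMap.opNorm_le_bound _ (norm_nonneg z) fun y => ?_
  rw [s8L_apply, mul_comm ‖z‖ ‖y‖]
  exact s8_abs_dot_le y z

lemma s8L_cont : Continuous fun z : EuclideanSpace ℝ (Fin p) => s8L z := by
  unfold s8L
  exact continuous_finset_sum _ fun i _ =>
    ((Complex.continuous_ofReal.comp (EuclideanSpace.proj (𝕜 := ℝ) i).continuous).smul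
      continuous_const)

noncomputable def s8c (n : ℕ) (z : EuclideanSpace ℝ (Fin p)) :
    ContinuousMultilinearMap ℂ (fun _ : Fin n => EuclideanSpace ℂ (Fin p)) ℂ :=
  (ContinuousMultilinearMap.mkPiAlgebraFin ℂ n ℂ).compContinuousLinearMap (fun _ => s8L z)

lemma s8c_apply (n : ℕ) (z : EuclideanSpace ℝ (Fin p)) (y : EuclideanSpace ℂ (Fin p)) :
    s8c n z (fun _ => y) = (∑ i, y i * (z i : ℂ)) ^ n := by
  simp [s8c, ContinuousMultilinearMap.compContinuousLinearMap_apply,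
    ContinuousMultilinearMap.mkPiAlgebraFin_apply, List.prod_ofFn, s8L_apply]

lemma s8c_norm (n : ℕ) (z : EuclideanSpace ℝ (Fin p)) : ‖s8c n z‖ ≤ ‖z‖ ^ n := by
  have h1 := (ContinuousMultilinearMap.mkPiAlgebraFin ℂ n ℂ).norm_compContinuousLinearMap_le
    (fun _ => s8L z)
  have h2 : ‖ContinuousMultilinearMap.mkPiAlgebraFin ℂ n ℂ‖ ≤ 1 := by
    simpa using ContinuousMultilinearMap.norm_mkPiAlgebraFin_le (𝕜 := ℂ) (n := n) (A := ℂ)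
  have h3 : ∏ _i : Fin n, ‖s8L z‖ ≤ ‖z‖ ^ n := by
    rw [Finset.prod_const, Finset.card_univ, Fintype.card_fin]
    exact pow_le_pow_left₀ (norm_nonneg _) (s8L_norm z) n
  calc ‖s8c n z‖ ≤ ‖ContinuousMultilinearMap.mkPiAlgebraFin ℂ n ℂ‖ * ∏ _i : Fin n, ‖s8L z‖ := h1
    _ ≤ 1 * (‖z‖ ^ n) := by
        apply mul_le_mul h2 h3 (Finset.prod_nonneg fun _ _ => norm_nonneg _) zero_le_one
    _ = ‖z‖ ^ n := one_mul _

lemma s8c_cont (n : ℕ) : Continuous fun z : EuclideanSpace ℝ (Fin p) => s8c n z := by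
  have : (fun z : EuclideanSpace ℝ (Fin p) => s8c n z)
      = (fun z => (ContinuousMultilinearMap.mkPiAlgebraFin ℂ n ℂ).compContinuousLinearMapLRight
          (fun _ : Fin n => s8L z)) := rfl
  rw [this]
  exact (ContinuousMultilinearMap.mkPiAlgebraFin ℂ n
    ℂ).compContinuousLinearMapLRight.coe_continuous.comp (continuous_pi fun _ => s8L_cont)


lemma s8_coord_analytic (i : Fin p) :
    AnalyticOnNhd ℂ (fun y : EuclideanSpace ℂ (Fin p) => y i) Set.univ := by
  have h := ContinuousLinearMap.analyticOnNhd
    (EuclideanSpace.proj i : EuclideanSpace ℂ (Fin p) →L[ℂ] ℂ)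
    (Set.univ : Set (EuclideanSpace ℂ (Fin p)))
  have he : ⇑(EuclideanSpace.proj i : EuclideanSpace ℂ (Fin p) →L[ℂ] ℂ)
      = fun y : EuclideanSpace ℂ (Fin p) => y i := by
    funext y; simp
  rwa [he] at h

lemma s8_poly_analytic (a : EuclideanSpace ℝ (Fin p)) (A : Matrix (Fin p) (Fin p) ℝ) :
    AnalyticOnNhd ℂ (fun y : EuclideanSpace ℂ (Fin p) =>
      (∑ i, y i * (a i : ℂ)) + (1 / 2) * ∑ i, ∑ j, y i * (A i j : ℂ) * y j) Set.univ := by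
  apply AnalyticOnNhd.add
  · exact Finset.analyticOnNhd_fun_sum _ fun i _ => (s8_coord_analytic i).mul analyticOnNhd_const
  · apply AnalyticOnNhd.mul analyticOnNhd_const
    refine Finset.analyticOnNhd_fun_sum _ fun i _ => Finset.analyticOnNhd_fun_sum _ fun j _ => ?_
    exact ((s8_coord_analytic i).mul analyticOnNhd_const).mul (s8_coord_analytic j)
lemma s8_emin_nonneg (z : EuclideanSpace ℝ (Fin p)) : 0 ≤ min (‖z‖ ^ 2) ‖z‖ :=
  le_min (by positivity) (norm_nonneg _)

lemma s8_eind_nonneg (c : ℝ) (z : EuclideanSpace ℝ (Fin p)) :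
    0 ≤ (s8S p).indicator (fun z => Real.exp (c * ‖z‖)) z :=
  Set.indicator_nonneg (fun z _ => (Real.exp_pos _).le) z

lemma s8_emin_small {z : EuclideanSpace ℝ (Fin p)} (h : ‖z‖ ≤ 1) :
    min (‖z‖ ^ 2) ‖z‖ = ‖z‖ ^ 2 :=
  min_eq_left (by nlinarith [norm_nonneg z])

lemma s8_eind_large (c : ℝ) {z : EuclideanSpace ℝ (Fin p)} (h : 1 < ‖z‖) :
    (s8S p).indicator (fun z => Real.exp (c * ‖z‖)) z = Real.exp (c * ‖z‖) :=
  Set.indicator_of_mem (show z ∈ s8S p from h) _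

lemma s8c_integrable (hmom : ∫⁻ z, ENNReal.ofReal (min (‖z‖ ^ 2) ‖z‖) ∂K < ⊤)
    (hexp : ∀ k : EuclideanSpace ℝ (Fin p),
      ∫⁻ z in {z : EuclideanSpace ℝ (Fin p) | 1 < ‖z‖},
        ENNReal.ofReal (Real.exp ⟪k, z⟫) ∂K < ⊤)
    (c : ℝ) (hc : 1 ≤ c) (n : ℕ) (hn : 2 ≤ n) :
    Integrable (fun z => s8c (p := p) n z) K ∧
      ∫ z, ‖s8c (p := p) n z‖ ∂K ≤ ∫ z, (min (‖z‖ ^ 2) ‖z‖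
        + ((n ! : ℝ) * c⁻¹ ^ n) * (s8S p).indicator (fun z => Real.exp (c * ‖z‖)) z) ∂K := by
  have hc0 : (0:ℝ) < c := lt_of_lt_of_le one_pos hc
  have hB : Integrable (fun z => min (‖z‖ ^ 2) ‖z‖
      + ((n ! : ℝ) * c⁻¹ ^ n) * (s8S p).indicator (fun z => Real.exp (c * ‖z‖)) z) K :=
    (s8_min_integrable hmom).add ((s8_env_integrable hexp c (le_of_lt hc0)).const_mul _)
  have hpt : ∀ z : EuclideanSpace ℝ (Fin p), ‖s8c n z‖ ≤ min (‖z‖ ^ 2) ‖z‖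
      + ((n ! : ℝ) * c⁻¹ ^ n) * (s8S p).indicator (fun z => Real.exp (c * ‖z‖)) z := by
    intro z
    rcases le_or_gt ‖z‖ 1 with hz | hz
    · have h1 : ‖s8c n z‖ ≤ ‖z‖ ^ 2 := by
        refine (s8c_norm n z).trans ?_
        calc ‖z‖ ^ n ≤ ‖z‖ ^ 2 := pow_le_pow_of_le_one (norm_nonneg _) hz hn
          _ = ‖z‖ ^ 2 := rfl
      have h2 : 0 ≤ ((n ! : ℝ) * c⁻¹ ^ n) * (s8S p).indicator (fun z => Real.exp (c * ‖z‖)) z :=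
        mul_nonneg (by positivity) (s8_eind_nonneg c z)
      rw [s8_emin_small hz] at *
      linarith
    · have h1 : ‖s8c n z‖ ≤ ((n ! : ℝ) * c⁻¹ ^ n) * Real.exp (c * ‖z‖) := by
        refine (s8c_norm n z).trans ?_
        have h2 : (c * ‖z‖) ^ n ≤ (n ! : ℝ) * Real.exp (c * ‖z‖) :=
          s8_pow_le_exp _ (by positivity) n
        have h3 : ‖z‖ ^ n = c⁻¹ ^ n * (c * ‖z‖) ^ n := by
          rw [mul_pow, ← mul_assoc, ← mul_pow, inv_mul_cancel₀ (ne_of_gt hc0), one_pow, one_mul]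
        rw [h3]
        calc c⁻¹ ^ n * (c * ‖z‖) ^ n ≤ c⁻¹ ^ n * ((n ! : ℝ) * Real.exp (c * ‖z‖)) :=
              mul_le_mul_of_nonneg_left h2 (by positivity)
          _ = ((n ! : ℝ) * c⁻¹ ^ n) * Real.exp (c * ‖z‖) := by ring
      rw [s8_eind_large c hz]
      have := s8_emin_nonneg z
      linarith
  have hint : Integrable (fun z => s8c (p := p) n z) K :=
    Integrable.mono' hB (s8c_cont n).aestronglyMeasurable
      (Filter.Eventually.of_forall hpt)
  exact ⟨hint, integral_mono hint.norm hB hpt⟩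

noncomputable def s8P (K : Measure (EuclideanSpace ℝ (Fin p))) :
    FormalMultilinearSeries ℂ (EuclideanSpace ℂ (Fin p)) ℂ
  | 0 => 0
  | 1 => 0
  | (m + 2) => (((m + 2)! : ℂ))⁻¹ • ∫ z, s8c (m + 2) z ∂K

lemma s8P_radius (hmom : ∫⁻ z, ENNReal.ofReal (min (‖z‖ ^ 2) ‖z‖) ∂K < ⊤)
    (hexp : ∀ k : EuclideanSpace ℝ (Fin p),
      ∫⁻ z in {z : EuclideanSpace ℝ (Fin p) | 1 < ‖z‖},
        ENNReal.ofReal (Real.exp ⟪k, z⟫) ∂K < ⊤) :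
    (s8P (p := p) K).radius = ⊤ := by
  refine ENNReal.eq_top_of_forall_nnreal_le fun r => ?_
  set c : ℝ := max (r : ℝ) 1 with hc_def
  have hc1 : 1 ≤ c := le_max_right _ _
  have hc0 : (0:ℝ) < c := lt_of_lt_of_le one_pos hc1
  have hrc : (r : ℝ) ≤ c := le_max_left _ _
  set I₁ : ℝ := ∫ z, min (‖z‖ ^ 2) ‖z‖ ∂K with hI₁
  set I₂ : ℝ := ∫ z, (s8S p).indicator (fun z => Real.exp (c * ‖z‖)) z ∂K with hI₂
  have hI₁n : 0 ≤ I₁ := integral_nonneg s8_emin_nonneg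
  have hI₂n : 0 ≤ I₂ := integral_nonneg (s8_eind_nonneg c)
  refine (s8P (p := p) K).le_radius_of_bound (Real.exp r * I₁ + I₂) fun n => ?_
  match n with
  | 0 => simpa [s8P] using by positivity
  | 1 => simpa [s8P] using by positivity
  | (m + 2) => ?_
  have h1 := s8c_integrable (K := K) hmom hexp c hc1 (m + 2) (by omega)
  have hPle : ‖s8P K (m + 2)‖ ≤ (((m + 2)! : ℝ))⁻¹ * (I₁ + (((m + 2)! : ℝ) * c⁻¹ ^ (m + 2)) * I₂) := by
    have hnorm : ‖s8P K (m + 2)‖ = (((m + 2)! : ℝ))⁻¹ * ‖∫ z, s8c (m + 2) z ∂K‖ := by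
      rw [show s8P K (m + 2) = (((m + 2)! : ℂ))⁻¹ • ∫ z, s8c (m + 2) z ∂K from rfl,
        norm_smul (((m + 2)! : ℂ))⁻¹ (∫ z, s8c (m + 2) z ∂K), norm_inv, Complex.norm_natCast]
    rw [hnorm]
    apply mul_le_mul_of_nonneg_left _ (by positivity)
    refine (norm_integral_le_integral_norm _).trans ?_
    refine h1.2.trans (le_of_eq ?_)
    rw [integral_add (s8_min_integrable hmom)
      (((s8_env_integrable hexp c (le_of_lt hc0)).const_mul _)), integral_const_mul]
  have hfac : (0:ℝ) < ((m + 2)! : ℝ) := by exact_mod_cast Nat.factorial_pos (m + 2)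
  have hr2 : ((r:ℝ)) ^ (m + 2) ≤ ((m + 2)! : ℝ) * Real.exp r := s8_pow_le_exp _ r.2 (m + 2)
  have hrc2 : ((r:ℝ)) ^ (m + 2) * c⁻¹ ^ (m + 2) ≤ 1 := by
    rw [← mul_pow]
    refine pow_le_one₀ (by positivity) ?_
    rw [← div_eq_mul_inv]
    exact div_le_one_of_le₀ hrc (le_of_lt hc0)
  have hrn : (0:ℝ) ≤ (r:ℝ) ^ (m + 2) := by positivity
  calc ‖s8P K (m + 2)‖ * (r:ℝ) ^ (m + 2)
      ≤ ((((m + 2)! : ℝ))⁻¹ * (I₁ + (((m + 2)! : ℝ) * c⁻¹ ^ (m + 2)) * I₂)) * (r:ℝ) ^ (m + 2) :=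
        mul_le_mul_of_nonneg_right hPle hrn
    _ = (((m + 2)! : ℝ))⁻¹ * (r:ℝ) ^ (m + 2) * I₁
        + ((r:ℝ) ^ (m + 2) * c⁻¹ ^ (m + 2)) * I₂ := by field_simp
    _ ≤ Real.exp r * I₁ + 1 * I₂ := by
        have h3 : (((m + 2)! : ℝ))⁻¹ * (r:ℝ) ^ (m + 2) ≤ Real.exp r := by
          rw [inv_mul_le_iff₀ hfac]; exact hr2
        exact add_le_add (mul_le_mul_of_nonneg_right h3 hI₁n)
          (mul_le_mul_of_nonneg_right hrc2 hI₂n)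
    _ = Real.exp r * I₁ + I₂ := by ring

lemma s8_w_cont (y : EuclideanSpace ℂ (Fin p)) :
    Continuous fun z : EuclideanSpace ℝ (Fin p) => ∑ i, y i * (z i : ℂ) :=
  continuous_finset_sum _ fun i _ => continuous_const.mul
    (Complex.continuous_ofReal.comp (EuclideanSpace.proj (𝕜 := ℝ) i).continuous)

lemma s8_hasSum_main (hmom : ∫⁻ z, ENNReal.ofReal (min (‖z‖ ^ 2) ‖z‖) ∂K < ⊤)
    (hexp : ∀ k : EuclideanSpace ℝ (Fin p),
      ∫⁻ z in {z : EuclideanSpace ℝ (Fin p) | 1 < ‖z‖},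
        ENNReal.ofReal (Real.exp ⟪k, z⟫) ∂K < ⊤)
    (y : EuclideanSpace ℂ (Fin p)) :
    HasSum (fun n => s8P K n fun _ => y)
      (∫ z, (Complex.exp (∑ i, y i * (z i : ℂ)) - 1 - ∑ i, y i * (z i : ℂ)) ∂K) := by
  set M : ℝ := ‖y‖ with hM
  have hM0 : 0 ≤ M := norm_nonneg y
  set w : EuclideanSpace ℝ (Fin p) → ℂ := fun z => ∑ i, y i * (z i : ℂ) with hw
  set Emin : EuclideanSpace ℝ (Fin p) → ℝ := fun z => min (‖z‖ ^ 2) ‖z‖ with hEm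
  set Eind : EuclideanSpace ℝ (Fin p) → ℝ :=
    (s8S p).indicator (fun z => Real.exp ((2 * M) * ‖z‖)) with hEi
  have hEindInt : Integrable Eind K := s8_env_integrable hexp (2 * M) (by positivity)
  have hEminInt : Integrable Emin K := s8_min_integrable hmom
  set F : ℕ → EuclideanSpace ℝ (Fin p) → ℂ :=
    fun n z => (((n + 2)! : ℂ))⁻¹ * (w z) ^ (n + 2) with hF
  set B : ℕ → EuclideanSpace ℝ (Fin p) → ℝ :=
    fun n z => (M ^ (n + 2) * (((n + 2)! : ℝ))⁻¹) * Emin z + ((1:ℝ)/2) ^ (n + 2) * Eind z with hB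
  have hBint : ∀ n, Integrable (B n) K :=
    fun n => (hEminInt.const_mul _).add (hEindInt.const_mul _)
  have hFb : ∀ n z, ‖F n z‖ ≤ B n z := by
    intro n z
    have hfac : (0:ℝ) < ((n + 2)! : ℝ) := by exact_mod_cast Nat.factorial_pos (n + 2)
    have hwz : ‖w z‖ ≤ M * ‖z‖ := s8_abs_dot_le y z
    have hFnorm : ‖F n z‖ = (((n + 2)! : ℝ))⁻¹ * ‖w z‖ ^ (n + 2) := by
      rw [hF]; simp [norm_mul, norm_pow]
    have h0 : ‖F n z‖ ≤ (((n + 2)! : ℝ))⁻¹ * (M * ‖z‖) ^ (n + 2) := by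
      rw [hFnorm]
      exact mul_le_mul_of_nonneg_left (pow_le_pow_left₀ (norm_nonneg _) hwz _) (by positivity)
    rcases le_or_gt ‖z‖ 1 with hz | hz
    · have h1 : (M * ‖z‖) ^ (n + 2) ≤ M ^ (n + 2) * Emin z := by
        simp only [hEm]
        rw [mul_pow, s8_emin_small hz]
        refine mul_le_mul_of_nonneg_left ?_ (by positivity)
        exact pow_le_pow_of_le_one (norm_nonneg _) hz (by omega)
      have h2 : (0:ℝ) ≤ ((1:ℝ)/2) ^ (n + 2) * Eind z :=
        mul_nonneg (by positivity) (s8_eind_nonneg _ z)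
      calc ‖F n z‖ ≤ (((n + 2)! : ℝ))⁻¹ * (M ^ (n + 2) * Emin z) := by
            refine h0.trans (mul_le_mul_of_nonneg_left h1 (by positivity))
        _ ≤ B n z := by simp only [hB]; nlinarith
    · have hEz : Eind z = Real.exp ((2 * M) * ‖z‖) :=
        Set.indicator_of_mem (show z ∈ s8S p from hz) _
      have h1 : ((2 * M) * ‖z‖) ^ (n + 2) ≤ ((n + 2)! : ℝ) * Real.exp ((2 * M) * ‖z‖) :=
        s8_pow_le_exp _ (by positivity) _
      have h2 : (M * ‖z‖) ^ (n + 2) = ((1:ℝ)/2) ^ (n + 2) * ((2 * M) * ‖z‖) ^ (n + 2) := by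
        have hq : ((1:ℝ)/2) * ((2 * M) * ‖z‖) = M * ‖z‖ := by ring
        rw [← hq, mul_pow]
      have h3 : (0:ℝ) ≤ (M ^ (n + 2) * (((n + 2)! : ℝ))⁻¹) * Emin z :=
        mul_nonneg (by positivity) (s8_emin_nonneg z)
      refine h0.trans ?_
      simp only [hB]
      rw [hEz, h2]
      have h4 : (((n + 2)! : ℝ))⁻¹ * (((1:ℝ)/2) ^ (n + 2) * ((2 * M) * ‖z‖) ^ (n + 2))
          ≤ ((1:ℝ)/2) ^ (n + 2) * Real.exp ((2 * M) * ‖z‖) := by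
        rw [mul_comm ((((n + 2)! : ℝ))⁻¹) _, mul_assoc]
        refine mul_le_mul_of_nonneg_left ?_ (by positivity)
        rw [mul_comm, inv_mul_le_iff₀ hfac]
        exact h1
      linarith
  have hFmeas : ∀ n, Continuous (F n) := by
    intro n
    exact continuous_const.mul ((s8_w_cont y).pow _)
  have hFint : ∀ n, Integrable (F n) K := fun n =>
    Integrable.mono' (hBint n) (hFmeas n).aestronglyMeasurable
      (Filter.Eventually.of_forall (hFb n))
  have hsumB : Summable (fun n => (M ^ (n + 2) * (((n + 2)! : ℝ))⁻¹) * (∫ z, Emin z ∂K)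
      + ((1:ℝ)/2) ^ (n + 2) * (∫ z, Eind z ∂K)) := by
    apply Summable.add
    · apply Summable.mul_right
      have h := Real.summable_pow_div_factorial M
      have h2 := (summable_nat_add_iff (f := fun n => M ^ n / (n ! : ℝ)) 2).2 h
      simpa [div_eq_mul_inv] using h2
    · apply Summable.mul_right
      have h : Summable (fun n : ℕ => ((1:ℝ)/2) ^ n) :=
        summable_geometric_of_lt_one (by norm_num) (by norm_num)
      exact (summable_nat_add_iff (f := fun n => ((1:ℝ)/2) ^ n) 2).2 h
  have hsummInt : Summable (fun n => ∫ z, ‖F n z‖ ∂K) := by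
    refine Summable.of_nonneg_of_le
      (fun n => integral_nonneg fun z => norm_nonneg _) (fun n => ?_) hsumB
    have h := integral_mono (hFint n).norm (hBint n) (hFb n)
    refine h.trans (le_of_eq ?_)
    simp only [hB]
    rw [integral_add (hEminInt.const_mul _) (hEindInt.const_mul _),
      integral_const_mul, integral_const_mul]
  have hHS := hasSum_integral_of_summable_integral_norm hFint hsummInt
  have htsum : ∀ z, (∑' n, F n z) = Complex.exp (w z) - 1 - w z :=
    fun z => (s8_hasSum_tail (w z)).tsum_eq
  have heq : (fun z => ∑' n, F n z) = fun z => Complex.exp (w z) - 1 - w z := funext htsum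
  rw [heq] at hHS
  have hPapp : ∀ n : ℕ, s8P K (n + 2) (fun _ => y) = ∫ z, F n z ∂K := by
    intro n
    have hint := (s8c_integrable (K := K) hmom hexp 1 le_rfl (n + 2) (by omega)).1
    rw [show s8P K (n + 2) = ((((n + 2)! : ℂ))⁻¹ • ∫ z, s8c (n + 2) z ∂K) from rfl,
      ContinuousMultilinearMap.smul_apply, ContinuousMultilinearMap.integral_apply hint,
      ← integral_smul]
    exact integral_congr_ae (Filter.Eventually.of_forall fun z => by
      simp [s8c_apply, smul_eq_mul, hw, hF])
  have hshift : HasSum (fun n => s8P K (n + 2) fun _ => y)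
      (∫ z, (Complex.exp (w z) - 1 - w z) ∂K) := by
    have hfe : (fun n : ℕ => s8P K (n + 2) fun _ => y) = fun n => ∫ z, F n z ∂K :=
      funext hPapp
    rw [hfe]; exact hHS
  have hz01 : ∑ i ∈ Finset.range 2, (s8P K i fun _ => y) = 0 := by
    rw [Finset.sum_range_succ, Finset.sum_range_one]
    show (0 : ContinuousMultilinearMap ℂ (fun _ : Fin 0 => EuclideanSpace ℂ (Fin p)) ℂ)
        (fun _ => y) + (0 : ContinuousMultilinearMap ℂ
          (fun _ : Fin 1 => EuclideanSpace ℂ (Fin p)) ℂ) (fun _ => y) = 0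
    simp
  refine (hasSum_nat_add_iff' (f := fun n => s8P K n fun _ => y) 2).1 ?_
  rw [hz01, sub_zero]
  exact hshift

lemma s8_int_analytic (hmom : ∫⁻ z, ENNReal.ofReal (min (‖z‖ ^ 2) ‖z‖) ∂K < ⊤)
    (hexp : ∀ k : EuclideanSpace ℝ (Fin p),
      ∫⁻ z in {z : EuclideanSpace ℝ (Fin p) | 1 < ‖z‖},
        ENNReal.ofReal (Real.exp ⟪k, z⟫) ∂K < ⊤) :
    AnalyticOnNhd ℂ (fun y : EuclideanSpace ℂ (Fin p) =>
      ∫ z, (Complex.exp (∑ i, y i * (z i : ℂ)) - 1 - ∑ i, y i * (z i : ℂ)) ∂K) Set.univ := by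
  have hball : HasFPowerSeriesOnBall (fun y : EuclideanSpace ℂ (Fin p) =>
      ∫ z, (Complex.exp (∑ i, y i * (z i : ℂ)) - 1 - ∑ i, y i * (z i : ℂ)) ∂K)
      (s8P K) 0 ⊤ := by
    refine ⟨le_of_eq (s8P_radius hmom hexp).symm, ?_, ?_⟩
    · exact ENNReal.zero_lt_top
    · intro y hy
      simpa using s8_hasSum_main hmom hexp y
  intro y _
  exact hball.analyticAt_of_mem (by simp [EMetric.mem_ball, edist_lt_top])
lemma s8_integrable (hmom : ∫⁻ z, ENNReal.ofReal (min (‖z‖ ^ 2) ‖z‖) ∂K < ⊤)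
    (hexp : ∀ k : EuclideanSpace ℝ (Fin p),
      ∫⁻ z in {z : EuclideanSpace ℝ (Fin p) | 1 < ‖z‖},
        ENNReal.ofReal (Real.exp ⟪k, z⟫) ∂K < ⊤)
    (y : EuclideanSpace ℂ (Fin p)) :
    Integrable (fun z : EuclideanSpace ℝ (Fin p) =>
      Complex.exp (∑ i, y i * (z i : ℂ)) - 1 - ∑ i, y i * (z i : ℂ)) K := by
  set M : ℝ := ‖y‖ with hM
  have hM0 : 0 ≤ M := norm_nonneg y
  have hBint : Integrable (fun z => (M ^ 2 * Real.exp M) * min (‖z‖ ^ 2) ‖z‖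
      + 3 * (s8S p).indicator (fun z => Real.exp ((M + 1) * ‖z‖)) z) K :=
    ((s8_min_integrable hmom).const_mul _).add
      ((s8_env_integrable hexp (M + 1) (by positivity)).const_mul _)
  refine Integrable.mono' hBint ?_ (Filter.Eventually.of_forall fun z => ?_)
  · exact ((Complex.continuous_exp.comp (s8_w_cont y)).sub continuous_const).sub
      (s8_w_cont y) |>.aestronglyMeasurable
  · have hwz : ‖∑ i, y i * (z i : ℂ)‖ ≤ M * ‖z‖ := s8_abs_dot_le y z
    set u : ℂ := ∑ i, y i * (z i : ℂ) with hu
    rcases le_or_gt ‖z‖ 1 with hz | hz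
    · have h1 : ‖Complex.exp u - 1 - u‖ ≤ ‖u‖ ^ 2 * Real.exp ‖u‖ := s8_norm_exp_bound u
      have h2 : ‖u‖ ^ 2 ≤ M ^ 2 * ‖z‖ ^ 2 := by
        rw [← mul_pow]; exact pow_le_pow_left₀ (norm_nonneg _) hwz 2
      have h3 : Real.exp ‖u‖ ≤ Real.exp M := by
        apply Real.exp_le_exp.2
        calc ‖u‖ ≤ M * ‖z‖ := hwz
          _ ≤ M * 1 := by nlinarith
          _ = M := mul_one M
      have h4 : 0 ≤ 3 * (s8S p).indicator (fun z => Real.exp ((M + 1) * ‖z‖)) z :=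
        mul_nonneg (by norm_num) (s8_eind_nonneg _ z)
      rw [s8_emin_small hz]
      have h5 : ‖u‖ ^ 2 * Real.exp ‖u‖ ≤ (M ^ 2 * ‖z‖ ^ 2) * Real.exp M := by
        apply mul_le_mul h2 h3 (Real.exp_pos _).le (by positivity)
      nlinarith
    · have hind : (s8S p).indicator (fun z => Real.exp ((M + 1) * ‖z‖)) z
          = Real.exp ((M + 1) * ‖z‖) := Set.indicator_of_mem (show z ∈ s8S p from hz) _
      have h1 : ‖Complex.exp u - 1 - u‖ ≤ Real.exp (M * ‖z‖) + 1 + M * ‖z‖ := by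
        calc ‖Complex.exp u - 1 - u‖ ≤ ‖Complex.exp u - 1‖ + ‖u‖ := norm_sub_le _ _
          _ ≤ ‖Complex.exp u‖ + ‖(1:ℂ)‖ + ‖u‖ := by
              have := norm_sub_le (Complex.exp u) (1:ℂ); linarith
          _ ≤ Real.exp (M * ‖z‖) + 1 + M * ‖z‖ := by
              have he : ‖Complex.exp u‖ = Real.exp u.re := Complex.norm_exp u
              have hre : u.re ≤ M * ‖z‖ := (Complex.re_le_norm u).trans hwz
              have : Real.exp u.re ≤ Real.exp (M * ‖z‖) := Real.exp_le_exp.2 hre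
              simp only [norm_one]
              linarith [hwz]
      have hz0 : (0:ℝ) ≤ ‖z‖ := norm_nonneg z
      have h2 : Real.exp (M * ‖z‖) ≤ Real.exp ((M + 1) * ‖z‖) :=
        Real.exp_le_exp.2 (by nlinarith)
      have h3 : (1:ℝ) ≤ Real.exp ((M + 1) * ‖z‖) := Real.one_le_exp (by positivity)
      have h4 : M * ‖z‖ ≤ Real.exp ((M + 1) * ‖z‖) := by
        have := Real.add_one_le_exp ((M + 1) * ‖z‖)
        nlinarith
      have h5 : 0 ≤ (M ^ 2 * Real.exp M) * min (‖z‖ ^ 2) ‖z‖ :=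
        mul_nonneg (by positivity) (s8_emin_nonneg z)
      rw [hind]
      linarith

end Statement8Aux

/-- With `a ∈ ℝ^p`, `A` symmetric, and `K` a measure on `ℝ^p∖{0}` having a
finite second/first moment `∫ (|z|²∧|z|) dK < ∞` and all exponential tail moments, the
function `R(y) = y·a + ½ yᵀAy + ∫ (e^{y·z} − 1 − y·z) dK(z)` is well-defined and analytic on
all of `ℂ^p`. -/
theorem statement8 {p : ℕ} (a : EuclideanSpace ℝ (Fin p))
    (A : Matrix (Fin p) (Fin p) ℝ) (hA : A.IsSymm)
    (K : Measure (EuclideanSpace ℝ (Fin p))) (hK0 : K {0} = 0)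
    (hmom : ∫⁻ z, ENNReal.ofReal (min (‖z‖ ^ 2) ‖z‖) ∂K < ⊤)
    (hexp : ∀ k : EuclideanSpace ℝ (Fin p),
      ∫⁻ z in {z : EuclideanSpace ℝ (Fin p) | 1 < ‖z‖},
        ENNReal.ofReal (Real.exp ⟪k, z⟫) ∂K < ⊤) :
    (∀ y : EuclideanSpace ℂ (Fin p),
        Integrable (fun z : EuclideanSpace ℝ (Fin p) =>
          Complex.exp (∑ i, y i * (z i : ℂ)) - 1 - ∑ i, y i * (z i : ℂ)) K) ∧
      AnalyticOnNhd ℂ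
        (fun y : EuclideanSpace ℂ (Fin p) =>
          (∑ i, y i * (a i : ℂ)) + (1 / 2) * ∑ i, ∑ j, y i * (A i j : ℂ) * y j
            + ∫ z, (Complex.exp (∑ i, y i * (z i : ℂ)) - 1 - ∑ i, y i * (z i : ℂ)) ∂K)
        Set.univ := by
  constructor
  · exact fun y => s8_integrable hmom hexp y
  · exact (s8_poly_analytic a A).add (s8_int_analytic hmom hexp)
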